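/- arXiv:2308.03144 — 2 statements merged into one kernel-verified Lean document; each statement's English description precedes it below -/
import Mathlib

section
/- For 0 < l ≤ 2·arcsinh(1) and ρ(s) = (l/(2π))/cos(l s/(2π)) with X(l) = π²/l − (2π/l)·arcsin(sinh(l/2)/sinh 1), the derivative of log ρ satisfies |d/ds (log ρ(s))| ≤ e/(2π) for all s ∈ [−X(l), X(l)]. -/
open Real

/-- On the collar `[-X(l), X(l)]` the logarithmic derivative of the conformal factor
`ρ(s) = (l/(2π))/cos(l s/(2π))` satisfies `|d/ds log ρ(s)| ≤ e/(2π)`. -/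
theorem stmt5 (l : ℝ) (h0 : 0 < l) (h1 : l ≤ 2 * Real.arsinh 1) (s : ℝ)
    (hs : |s| ≤ π^2/l - (2*π/l) * Real.arcsin (Real.sinh (l/2) / Real.sinh 1)) :
    |deriv (fun s' : ℝ => Real.log ((l/(2*π)) / Real.cos (l*s'/(2*π)))) s|
      ≤ Real.exp 1 / (2*π) := by
  have hπ : (0:ℝ) < π := Real.pi_pos
  have h2π : (0:ℝ) < 2*π := by linarith
  set c : ℝ := l/(2*π) with hc
  have hcpos : 0 < c := div_pos h0 h2π
  set θ : ℝ := l*s/(2*π) with hθ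
  set r : ℝ := Real.sinh (l/2) / Real.sinh 1 with hr
  have hsinh1 : 0 < Real.sinh 1 := Real.sinh_pos_iff.mpr one_pos
  have hrpos : 0 < r := div_pos (Real.sinh_pos_iff.mpr (by linarith)) hsinh1
  have hrle : r ≤ 1 := by
    rw [hr, div_le_one hsinh1]
    have : Real.sinh (l/2) ≤ Real.sinh (Real.arsinh 1) := by
      rw [Real.sinh_le_sinh]; linarith
    rw [Real.sinh_arsinh] at this
    have : (1:ℝ) ≤ Real.sinh 1 := by
      nlinarith [Real.self_lt_sinh_iff.mpr (one_pos : (0:ℝ) < 1)]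
    linarith [Real.sinh_le_sinh.mpr h1, Real.sinh_arsinh 1,
      Real.sinh_le_sinh.mpr (show l/2 ≤ Real.arsinh 1 by linarith)]
  set α : ℝ := Real.arcsin r with hα
  have hα0 : 0 ≤ α := Real.arcsin_nonneg.mpr hrpos.le
  have hα2 : α ≤ π/2 := Real.arcsin_le_pi_div_two r
  have hsinα : Real.sin α = r := Real.sin_arcsin (by linarith) hrle
  -- bound on |θ|
  have hθb : |θ| ≤ π/2 - α := by
    have : |θ| = c * |s| := by
      rw [hθ, hc, abs_div, abs_mul, abs_of_pos h0, abs_of_pos h2π]; ring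
    rw [this]
    have h2 : c * |s| ≤ c * (π^2/l - (2*π/l) * α) := by
      apply mul_le_mul_of_nonneg_left hs hcpos.le
    calc c * |s| ≤ c * (π^2/l - (2*π/l) * α) := h2
      _ = π/2 - α := by rw [hc]; field_simp
  -- cos θ lower bound
  have hcosθ : r ≤ Real.cos θ := by
    have h1' : Real.cos (π/2 - α) ≤ Real.cos |θ| := by
      apply Real.cos_le_cos_of_nonneg_of_le_pi (abs_nonneg θ) (by linarith) hθb
    rw [Real.cos_pi_div_two_sub, hsinα] at h1'
    rwa [Real.cos_abs] at h1'
  have hcospos : 0 < Real.cos θ := lt_of_lt_of_le hrpos hcosθ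
  -- compute derivative
  set k : ℝ := l/(2*π)
  have hcosd : ∀ x : ℝ, HasDerivAt (fun s' : ℝ => Real.cos (l*s'/(2*π)))
      (-Real.sin (l*x/(2*π)) * k) x := by
    intro x
    have hin : HasDerivAt (fun s' : ℝ => l*s'/(2*π)) k x := by
      simpa using ((hasDerivAt_id x).const_mul l).div_const (2*π)
    have h := (Real.hasDerivAt_cos (l*x/(2*π))).comp x hin
    exact h
  have hg : HasDerivAt (fun s' : ℝ => c / Real.cos (l*s'/(2*π)))
      ((0 * Real.cos θ - c * (-Real.sin θ * k)) / (Real.cos θ)^2) s :=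
    (hasDerivAt_const s c).div (hcosd s) (ne_of_gt hcospos)
  have hgs : c / Real.cos θ ≠ 0 := ne_of_gt (div_pos hcpos hcospos)
  have hlog := hg.log hgs
  have hderiv : deriv (fun s' : ℝ => Real.log ((l/(2*π)) / Real.cos (l*s'/(2*π)))) s
      = k * Real.sin θ / Real.cos θ := by
    rw [hlog.deriv]
    field_simp
    ring
  rw [hderiv]
  -- final bound
  have hsin : |Real.sin θ| ≤ 1 := Real.abs_sin_le_one θ
  have hL : l ≤ 2 * Real.sinh (l/2) := by
    have := Real.self_le_sinh_iff.mpr (show (0:ℝ) ≤ l/2 by linarith)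
    linarith
  have key : l / Real.cos θ ≤ Real.exp 1 := by
    have h1 : l / Real.cos θ ≤ l / r := by
      apply div_le_div_of_nonneg_left h0.le hrpos hcosθ
    have h2 : l / r = l * Real.sinh 1 / Real.sinh (l/2) := by
      rw [hr]; field_simp
    have h3 : l * Real.sinh 1 / Real.sinh (l/2) ≤ 2 * Real.sinh 1 := by
      rw [div_le_iff₀ (Real.sinh_pos_iff.mpr (by linarith))]
      nlinarith
    have h4 : 2 * Real.sinh 1 ≤ Real.exp 1 := by
      rw [Real.sinh_eq]
      have := Real.exp_pos (-1)
      linarith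
    linarith [h1, h2 ▸ h3]
  have habs : |k * Real.sin θ / Real.cos θ| = k * |Real.sin θ| / Real.cos θ := by
    rw [abs_div, abs_mul, abs_of_pos (show 0 < k from hcpos), abs_of_pos hcospos]
  rw [habs]
  calc k * |Real.sin θ| / Real.cos θ ≤ k * 1 / Real.cos θ := by
        apply div_le_div_of_nonneg_right _ hcospos.le
        · exact mul_le_mul_of_nonneg_left hsin hcpos.le
    _ = (l / Real.cos θ) / (2*π) := by
        rw [mul_one]; show (l/(2*π))/Real.cos θ = _
        rw [div_div, div_div, mul_comm]
    _ ≤ Real.exp 1 / (2*π) := by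
        exact div_le_div_of_nonneg_right key h2π.le
end

section
/- For every t < s the average over σ ∈ [0, 2π] of e^{t−s}/|1 − e^{(t−s) − iσ}| equals (e^{t−s}/(1+e^{t−s})) · (2/π) K(k), where K is the complete elliptic integral of the first kind and k² = 4 e^{t−s}/(1+e^{t−s})², and this quantity is bounded above by C · (e^{t−s}/(1+e^{t−s})) · (1 + |log(1 − e^{t−s})|) for a universal constant C. -/
open Real MeasureTheory intervalIntegral
set_option maxHeartbeats 1000000

open Real MeasureTheory intervalIntegral

lemma abs_one_sub_exp (x σ : ℝ) :
    ‖1 - Complex.exp ((x:ℂ) - Complex.I * σ)‖ =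
    Real.sqrt (1 + Real.exp x ^ 2 - 2 * Real.exp x * Real.cos σ) := by
  rw [Complex.norm_def, Complex.normSq_apply]
  have h1 : (1 - Complex.exp ((x:ℂ) - Complex.I * σ)).re = 1 - Real.exp x * Real.cos σ := by
    simp [Complex.exp_re]
  have h2 : (1 - Complex.exp ((x:ℂ) - Complex.I * σ)).im = Real.exp x * Real.sin σ := by
    simp [Complex.exp_im]
  rw [h1, h2]
  congr 1
  nlinarith [Real.sin_sq_add_cos_sq σ]

lemma cont_h (a : ℝ) (ha : 0 < a) (ha1 : a < 1) :
    Continuous (fun ψ : ℝ => a / Real.sqrt ((1+a)^2 - 4*a*Real.cos ψ^2)) := by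
  have key : ∀ ψ : ℝ, 0 < (1+a)^2 - 4*a*Real.cos ψ^2 := by
    intro ψ
    nlinarith [Real.cos_sq_le_one ψ, sq_nonneg (Real.cos ψ), sq_nonneg (1-a)]
  apply Continuous.div continuous_const
  · exact Real.continuous_sqrt.comp (by continuity)
  · intro ψ
    exact ne_of_gt (Real.sqrt_pos.2 (key ψ))

lemma identity (a : ℝ) (ha : 0 < a) (ha1 : a < 1) :
    (∫ σ in (0:ℝ)..(2*π), a / Real.sqrt (1 + a^2 - 2*a*Real.cos σ))
      = 4 * (a/(1+a)) * ∫ ψ in (0:ℝ)..(π/2), 1 / Real.sqrt (1 - (4*a/(1+a)^2) * Real.sin ψ^2) := by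
  set h : ℝ → ℝ := fun ψ => a / Real.sqrt ((1+a)^2 - 4*a*Real.cos ψ^2) with hh
  have hc := cont_h a ha ha1
  have step1 : (∫ σ in (0:ℝ)..(2*π), a / Real.sqrt (1 + a^2 - 2*a*Real.cos σ))
      = ∫ σ in (0:ℝ)..(2*π), h (σ / 2) := by
    apply intervalIntegral.integral_congr
    intro σ _
    simp only [hh]
    congr 2
    have := Real.cos_sq (σ/2)
    rw [show 2*(σ/2) = σ by ring] at this
    nlinarith [this]
  have step2 : (∫ σ in (0:ℝ)..(2*π), h (σ / 2)) = 2 * ∫ ψ in (0:ℝ)..π, h ψ := by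
    have := intervalIntegral.integral_comp_div (a := (0:ℝ)) (b := 2*π) (c := (2:ℝ)) h two_ne_zero
    rw [this]
    norm_num
  have hint : ∀ u v : ℝ, IntervalIntegrable h volume u v :=
    fun u v => hc.intervalIntegrable u v
  have step3 : (∫ ψ in (0:ℝ)..π, h ψ) = 2 * ∫ ψ in (0:ℝ)..(π/2), h ψ := by
    have hsplit : (∫ ψ in (0:ℝ)..(π/2), h ψ) + (∫ ψ in (π/2:ℝ)..π, h ψ) = ∫ ψ in (0:ℝ)..π, h ψ :=
      intervalIntegral.integral_add_adjacent_intervals (hint _ _) (hint _ _)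
    have hrefl : (∫ ψ in (π/2:ℝ)..π, h ψ) = ∫ ψ in (0:ℝ)..(π/2), h ψ := by
      have := intervalIntegral.integral_comp_sub_left (a := (0:ℝ)) (b := π/2) h π
      rw [show π - π/2 = π/2 by ring, show π - (0:ℝ) = π by ring] at this
      rw [← this]
      apply intervalIntegral.integral_congr
      intro ψ _
      simp only [hh, Real.cos_pi_sub, neg_sq]
    linarith
  have step4 : (∫ ψ in (0:ℝ)..(π/2), h ψ)
      = (a/(1+a)) * ∫ ψ in (0:ℝ)..(π/2), 1 / Real.sqrt (1 - (4*a/(1+a)^2) * Real.sin ψ^2) := by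
    have hflip : (∫ ψ in (0:ℝ)..(π/2), h ψ) = ∫ ψ in (0:ℝ)..(π/2), h (π/2 - ψ) := by
      have := intervalIntegral.integral_comp_sub_left (a := (0:ℝ)) (b := π/2) h (π/2)
      rw [show π/2 - π/2 = (0:ℝ) by ring, show π/2 - (0:ℝ) = π/2 by ring] at this
      exact this.symm
    rw [hflip, ← intervalIntegral.integral_const_mul]
    apply intervalIntegral.integral_congr
    intro ψ _
    simp only [hh, Real.cos_pi_div_two_sub]
    have h1a : (0:ℝ) < 1 + a := by linarith
    have key : (1+a)^2 - 4*a*Real.sin ψ^2 = (1+a)^2 * (1 - (4*a/(1+a)^2) * Real.sin ψ^2) := by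
      field_simp
    rw [key, Real.sqrt_mul (by positivity), Real.sqrt_sq h1a.le]
    rw [mul_one_div, div_div]
  rw [step1, step2, step3, step4]
  ring


lemma Kbound (a : ℝ) (ha : 0 < a) (ha1 : a < 1) :
    (∫ ψ in (0:ℝ)..(π/2), 1 / Real.sqrt (1 - (4*a/(1+a)^2) * Real.sin ψ^2))
      ≤ Real.sqrt 2 * π * (1 + Real.log 2 + |Real.log (1-a)|) := by
  have h1a : (0:ℝ) < 1 + a := by linarith
  obtain ⟨δ, hδ⟩ : ∃ δ : ℝ, δ = (1-a)/(1+a) := ⟨_, rfl⟩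
  have hδ0 : 0 < δ := hδ ▸ div_pos (by linarith) h1a
  have hδ1 : δ < 1 := by rw [hδ, div_lt_one h1a]; linarith
  have hπ := Real.pi_pos
  obtain ⟨m, hm⟩ : ∃ m : ℝ, m = 2*(1-δ)/π := ⟨_, rfl⟩
  have hm0 : 0 < m := hm ▸ div_pos (by linarith) hπ
  have hmδ : 1 - m*(π/2) = δ := by rw [hm]; field_simp; ring
  have hden : ∀ ψ : ℝ, ψ ∈ Set.uIcc (0:ℝ) (π/2) → δ ≤ 1 - m*ψ := by
    intro ψ hψ
    rw [Set.uIcc_of_le (by positivity)] at hψ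
    have : m*ψ ≤ m*(π/2) := mul_le_mul_of_nonneg_left hψ.2 hm0.le
    linarith [hmδ]
  have hk : 4*a/(1+a)^2 = 1 - δ^2 := by rw [hδ]; field_simp; ring
  have hid : ∀ ψ : ℝ, 1 - (4*a/(1+a)^2) * Real.sin ψ^2
      = Real.cos ψ^2 + δ^2 * Real.sin ψ^2 := by
    intro ψ
    rw [hk]
    linear_combination -Real.sin_sq_add_cos_sq ψ
  have hδsq1 : δ^2 ≤ 1 := by nlinarith
  have hsq : ∀ ψ : ℝ, δ^2 ≤ 1 - (4*a/(1+a)^2) * Real.sin ψ^2 := by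
    intro ψ
    rw [hid ψ]
    nlinarith [mul_nonneg (sq_nonneg (Real.cos ψ)) (sub_nonneg.2 hδsq1),
      Real.sin_sq_add_cos_sq ψ]
  have hpt : ∀ ψ ∈ Set.uIcc (0:ℝ) (π/2),
      1 / Real.sqrt (1 - (4*a/(1+a)^2) * Real.sin ψ^2) ≤ Real.sqrt 2 * (1 / (1 - m*ψ)) := by
    intro ψ hψ
    have hd := hden ψ hψ
    rw [Set.uIcc_of_le (by positivity)] at hψ
    have hcos : (2/π)*(π/2 - ψ) ≤ Real.cos ψ := by
      have := Real.mul_le_sin (x := π/2 - ψ) (by linarith [hψ.2]) (by linarith [hψ.1])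
      rwa [Real.sin_pi_div_two_sub] at this
    have hsin : (2/π)*ψ ≤ Real.sin ψ := Real.mul_le_sin hψ.1 hψ.2
    have hcos0 : 0 ≤ Real.cos ψ :=
      le_trans (mul_nonneg (by positivity) (by linarith [hψ.2])) hcos
    have hsin0 : 0 ≤ Real.sin ψ := le_trans (mul_nonneg (by positivity) hψ.1) hsin
    have hlin : 1 - m*ψ ≤ Real.cos ψ + δ * Real.sin ψ := by
      have h2 : δ * ((2/π)*ψ) ≤ δ * Real.sin ψ := mul_le_mul_of_nonneg_left hsin hδ0.le
      have h3 : 1 - m*ψ = (2/π)*(π/2-ψ) + δ*((2/π)*ψ) := by rw [hm]; field_simp; ring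
      linarith
    have hmpos : 0 < 1 - m*ψ := lt_of_lt_of_le hδ0 hd
    have hkey : ((1-m*ψ)/Real.sqrt 2)^2 ≤ 1 - (4*a/(1+a)^2) * Real.sin ψ^2 := by
      rw [hid ψ, div_pow, Real.sq_sqrt (by norm_num : (0:ℝ) ≤ 2),
        div_le_iff₀ (by norm_num : (0:ℝ) < 2)]
      nlinarith [sq_nonneg (Real.cos ψ - δ * Real.sin ψ),
        mul_self_le_mul_self hmpos.le hlin]
    have hlb : (1-m*ψ)/Real.sqrt 2 ≤ Real.sqrt (1 - (4*a/(1+a)^2) * Real.sin ψ^2) := by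
      have h := Real.sqrt_le_sqrt hkey
      rwa [Real.sqrt_sq (by positivity)] at h
    have hpos2 : (0:ℝ) < (1-m*ψ)/Real.sqrt 2 := by positivity
    calc 1 / Real.sqrt (1 - (4*a/(1+a)^2) * Real.sin ψ^2)
        ≤ 1 / ((1-m*ψ)/Real.sqrt 2) := one_div_le_one_div_of_le hpos2 hlb
      _ = Real.sqrt 2 * (1 / (1 - m*ψ)) := by
          rw [one_div_div, mul_one_div]
  have hcont0 : Continuous (fun ψ : ℝ => 1 - (4*a/(1+a)^2) * Real.sin ψ^2) := by fun_prop
  have hcont1 : Continuous (fun ψ : ℝ => 1 / Real.sqrt (1 - (4*a/(1+a)^2) * Real.sin ψ^2)) := by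
    apply Continuous.div continuous_const (Real.continuous_sqrt.comp hcont0)
    intro ψ
    exact ne_of_gt (Real.sqrt_pos.2 (lt_of_lt_of_le (by positivity) (hsq ψ)))
  have hcontm : Continuous (fun ψ : ℝ => 1 - m*ψ) := by fun_prop
  have hcont2 : ContinuousOn (fun ψ : ℝ => Real.sqrt 2 * (1 / (1 - m*ψ)))
      (Set.uIcc (0:ℝ) (π/2)) := by
    apply ContinuousOn.mul continuousOn_const
    apply ContinuousOn.div continuousOn_const hcontm.continuousOn
    intro ψ hψ
    exact ne_of_gt (lt_of_lt_of_le hδ0 (hden ψ hψ))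
  have hI1 : IntervalIntegrable (fun ψ : ℝ => 1 / Real.sqrt (1 - (4*a/(1+a)^2) * Real.sin ψ^2))
      volume 0 (π/2) := hcont1.intervalIntegrable _ _
  have hI2 : IntervalIntegrable (fun ψ : ℝ => Real.sqrt 2 * (1 / (1 - m*ψ))) volume 0 (π/2) :=
    hcont2.intervalIntegrable
  have hmono : (∫ ψ in (0:ℝ)..(π/2), 1 / Real.sqrt (1 - (4*a/(1+a)^2) * Real.sin ψ^2))
      ≤ ∫ ψ in (0:ℝ)..(π/2), Real.sqrt 2 * (1 / (1 - m*ψ)) := by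
    apply intervalIntegral.integral_mono_on (by positivity) hI1 hI2
    intro ψ hψ
    exact hpt ψ (by rwa [Set.uIcc_of_le (by positivity)])
  have hFTC : (∫ ψ in (0:ℝ)..(π/2), 1 / (1 - m*ψ)) = (1/m) * (-Real.log δ) := by
    have hder : ∀ ψ ∈ Set.uIcc (0:ℝ) (π/2),
        HasDerivAt (fun ψ => -(1/m) * Real.log (1 - m*ψ)) (1 / (1 - m*ψ)) ψ := by
      intro ψ hψ
      have hne : 1 - m*ψ ≠ 0 := ne_of_gt (lt_of_lt_of_le hδ0 (hden ψ hψ))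
      have h1 : HasDerivAt (fun ψ : ℝ => 1 - m*ψ) (-m) ψ := by
        simpa using ((hasDerivAt_id ψ).const_mul m).const_sub 1
      have h2 := (h1.log hne).const_mul (-(1/m))
      refine h2.congr_deriv ?_
      field_simp [hm0.ne']
    have hint : IntervalIntegrable (fun ψ : ℝ => 1 / (1 - m*ψ)) volume 0 (π/2) := by
      apply ContinuousOn.intervalIntegrable
      apply ContinuousOn.div continuousOn_const hcontm.continuousOn
      intro ψ hψ
      exact ne_of_gt (lt_of_lt_of_le hδ0 (hden ψ hψ))
    rw [intervalIntegral.integral_eq_sub_of_hasDerivAt hder hint, hmδ]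
    simp [Real.log_one]
  have hRHS : (∫ ψ in (0:ℝ)..(π/2), Real.sqrt 2 * (1 / (1 - m*ψ)))
      = Real.sqrt 2 * ((1/m) * (-Real.log δ)) := by
    rw [intervalIntegral.integral_const_mul, hFTC]
  have hL0 : 0 ≤ -Real.log δ := by
    have := Real.log_nonpos hδ0.le hδ1.le
    linarith
  have hfinal : (1/m) * (-Real.log δ) ≤ π * (1 + Real.log 2 + |Real.log (1-a)|) := by
    have hkey2 : -Real.log δ ≤ 2*(1-δ)*(1 + -Real.log δ) := by
      rcases le_or_gt (1/2 : ℝ) δ with hc | hc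
      · have h1 : Real.log (1/δ) ≤ 1/δ - 1 := Real.log_le_sub_one_of_pos (by positivity)
        have h2 : Real.log (1/δ) = -Real.log δ := by rw [one_div, Real.log_inv]
        have h3 : 1/δ - 1 ≤ 2*(1-δ) := by
          rw [div_sub' (ne_of_gt hδ0), div_le_iff₀ hδ0]
          nlinarith
        nlinarith
      · nlinarith
    have h1m : 1/m = π/(2*(1-δ)) := by rw [hm, one_div_div]
    rw [h1m, div_mul_eq_mul_div, div_le_iff₀ (by linarith)]
    have hLbound : -Real.log δ ≤ Real.log 2 + |Real.log (1-a)| := by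
      have hlog1a : Real.log (1-a) ≤ 0 := Real.log_nonpos (by linarith) (by linarith)
      have habs : |Real.log (1-a)| = -Real.log (1-a) := abs_of_nonpos hlog1a
      have hld : Real.log δ = Real.log (1-a) - Real.log (1+a) := by
        rw [hδ]; exact Real.log_div (by linarith) (by linarith)
      have hl2 : Real.log (1+a) ≤ Real.log 2 := Real.log_le_log (by linarith) (by linarith)
      rw [hld, habs]
      linarith
    have hX0 : 0 ≤ |Real.log (1-a)| := abs_nonneg _
    have hl2' : (0:ℝ) ≤ Real.log 2 := Real.log_nonneg (by norm_num)
    have hA : 1 + -Real.log δ ≤ 1 + Real.log 2 + |Real.log (1-a)| := by linarith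
    have hB : 2*(1-δ)*(1 + -Real.log δ) ≤ 2*(1-δ)*(1 + Real.log 2 + |Real.log (1-a)|) :=
      mul_le_mul_of_nonneg_left hA (by linarith)
    nlinarith [mul_le_mul_of_nonneg_left (hkey2.trans hB) hπ.le]
  calc (∫ ψ in (0:ℝ)..(π/2), 1 / Real.sqrt (1 - (4*a/(1+a)^2) * Real.sin ψ^2))
      ≤ Real.sqrt 2 * ((1/m) * (-Real.log δ)) := by rw [← hRHS]; exact hmono
    _ ≤ Real.sqrt 2 * (π * (1 + Real.log 2 + |Real.log (1-a)|)) :=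
        mul_le_mul_of_nonneg_left hfinal (by positivity)
    _ = Real.sqrt 2 * π * (1 + Real.log 2 + |Real.log (1-a)|) := by ring

/-- The circle average of `e^{t-s}/|1 - e^{(t-s)-iσ}|` for `t < s` equals
`(e^{t-s}/(1+e^{t-s})) (2/π) K(k)` with `k² = 4e^{t-s}/(1+e^{t-s})²`, `K` being the
complete elliptic integral of the first kind, and is bounded by
`C (e^{t-s}/(1+e^{t-s})) (1 + |log(1 - e^{t-s})|)` for a universal constant `C`. -/
theorem stmt9 : ∃ C : ℝ, 0 < C ∧ ∀ t s : ℝ, t < s →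
    ((1/(2*π)) * ∫ σ in (0:ℝ)..(2*π),
        Real.exp (t-s) / ‖1 - Complex.exp (((t-s : ℝ) : ℂ) - Complex.I * σ)‖
      = (Real.exp (t-s) / (1 + Real.exp (t-s))) * (2/π) *
        ∫ ψ in (0:ℝ)..(π/2),
          1 / Real.sqrt (1 - (4 * Real.exp (t-s) / (1 + Real.exp (t-s))^2)
            * (Real.sin ψ)^2)) ∧
    (1/(2*π)) * (∫ σ in (0:ℝ)..(2*π),
        Real.exp (t-s) / ‖1 - Complex.exp (((t-s : ℝ) : ℂ) - Complex.I * σ)‖)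
      ≤ C * (Real.exp (t-s) / (1 + Real.exp (t-s)))
          * (1 + |Real.log (1 - Real.exp (t-s))|) := by
  refine ⟨6, by norm_num, fun t s hts => ?_⟩
  have hπ := Real.pi_pos
  have ha : 0 < Real.exp (t-s) := Real.exp_pos _
  have ha1 : Real.exp (t-s) < 1 := by
    rw [Real.exp_lt_one_iff]
    linarith
  have hcongr : (∫ σ in (0:ℝ)..(2*π),
        Real.exp (t-s) / ‖1 - Complex.exp (((t-s : ℝ) : ℂ) - Complex.I * σ)‖)
      = ∫ σ in (0:ℝ)..(2*π),
        Real.exp (t-s) / Real.sqrt (1 + Real.exp (t-s)^2 - 2*Real.exp (t-s)*Real.cos σ) := by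
    apply intervalIntegral.integral_congr
    intro σ _
    simp only [abs_one_sub_exp]
  have hid := identity (Real.exp (t-s)) ha ha1
  have hKb := Kbound (Real.exp (t-s)) ha ha1
  have heq : (1/(2*π)) * (∫ σ in (0:ℝ)..(2*π),
        Real.exp (t-s) / ‖1 - Complex.exp (((t-s : ℝ) : ℂ) - Complex.I * σ)‖)
      = (Real.exp (t-s) / (1 + Real.exp (t-s))) * (2/π) *
        ∫ ψ in (0:ℝ)..(π/2),
          1 / Real.sqrt (1 - (4 * Real.exp (t-s) / (1 + Real.exp (t-s))^2)
            * (Real.sin ψ)^2) := by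
    rw [hcongr, hid]
    field_simp
    ring
  refine ⟨heq, ?_⟩
  rw [heq]
  have h1a : (0:ℝ) < 1 + Real.exp (t-s) := by linarith
  have hfrac : (0:ℝ) ≤ Real.exp (t-s) / (1 + Real.exp (t-s)) := by positivity
  have hs2 : Real.sqrt 2 ≤ 1.5 := by
    nlinarith [Real.sq_sqrt (by norm_num : (0:ℝ) ≤ 2), Real.sqrt_nonneg 2]
  have hlog2 : Real.log 2 ≤ 1 := by
    have := Real.log_le_sub_one_of_pos (by norm_num : (0:ℝ) < 2)
    linarith
  have hX0 : (0:ℝ) ≤ |Real.log (1 - Real.exp (t-s))| := abs_nonneg _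
  calc (Real.exp (t-s) / (1 + Real.exp (t-s))) * (2/π) *
        (∫ ψ in (0:ℝ)..(π/2),
          1 / Real.sqrt (1 - (4 * Real.exp (t-s) / (1 + Real.exp (t-s))^2) * (Real.sin ψ)^2))
      ≤ (Real.exp (t-s) / (1 + Real.exp (t-s))) * (2/π) *
        (Real.sqrt 2 * π * (1 + Real.log 2 + |Real.log (1 - Real.exp (t-s))|)) := by
        apply mul_le_mul_of_nonneg_left hKb (by positivity)
    _ = (Real.exp (t-s) / (1 + Real.exp (t-s))) *
        (2 * Real.sqrt 2 * (1 + Real.log 2 + |Real.log (1 - Real.exp (t-s))|)) := by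
        field_simp
    _ ≤ (Real.exp (t-s) / (1 + Real.exp (t-s))) *
        (6 * (1 + |Real.log (1 - Real.exp (t-s))|)) := by
        apply mul_le_mul_of_nonneg_left _ hfrac
        nlinarith [mul_nonneg (sub_nonneg.2 hs2)
          (by linarith [Real.log_nonneg (by norm_num : (1:ℝ) ≤ 2)] :
            (0:ℝ) ≤ 1 + Real.log 2 + |Real.log (1 - Real.exp (t-s))|)]
    _ = 6 * (Real.exp (t-s) / (1 + Real.exp (t-s)))
          * (1 + |Real.log (1 - Real.exp (t-s))|) := by ring
end
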